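/- Let s be a dense thread. Then there is no proper coloring of the graph G_s with countably many colors in which every color class has the Baire property. In particular, G_s admits no proper coloring with countably many Borel color classes, i.e. the Borel chromatic number of G_s is uncountable. -/

import Mathlib

open MeasureTheory

/-- A dense thread: `s k` codes (by its first `k` bits) a binary string of
length `k`, and every finite binary string is a prefix of some `s k`. -/
def DenseThread (s : ℕ → ℕ → Bool) : Prop :=
  ∀ (m : ℕ) (t : ℕ → Bool), ∃ k, m ≤ k ∧ ∀ i < m, s k i = t i

/-- Adjacency in the graph `G_s` associated to a dense thread `s`. -/
def GsAdj (s : ℕ → ℕ → Bool) (a b : ℕ → Bool) : Prop :=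
  a ≠ b ∧ ∃ k, (∀ i < k, a i = s k i) ∧ (∀ i < k, b i = s k i) ∧
    a k ≠ b k ∧ ∀ i > k, a i = b i

private lemma meagre_union {X : Type*} [TopologicalSpace X] {A B : Set X}
    (hA : IsMeagre A) (hB : IsMeagre B) : IsMeagre (A ∪ B) := by
  rw [IsMeagre, Set.compl_union]
  exact Filter.inter_mem hA hB

private lemma Gs_no_baire_coloring
    (s : ℕ → ℕ → Bool) (hs : DenseThread s) :
    ¬∃ c : (ℕ → Bool) → ℕ, (∀ a b, GsAdj s a b → c a ≠ c b) ∧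
        ∀ n, BaireMeasurableSet (c ⁻¹' {n}) := by
  rintro ⟨c, hc, hbp⟩
  -- some colour class is nonmeagre
  have hnm : ∃ n, ¬ IsMeagre (c ⁻¹' {n}) := by
    by_contra h
    push_neg at h
    have hun : IsMeagre (⋃ n, c ⁻¹' {n}) := isMeagre_iUnion h
    have huniv : (⋃ n, c ⁻¹' {n}) = Set.univ := by
      ext x; simp
    rw [huniv] at hun
    have hres : (∅ : Set (ℕ → Bool)) ∈ residual _ := by
      simpa [IsMeagre] using hun
    exact Set.not_nonempty_empty (dense_of_mem_residual hres).nonempty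
  obtain ⟨n, hn⟩ := hnm
  set A : Set (ℕ → Bool) := c ⁻¹' {n} with hA
  obtain ⟨U, hUo, hUeq⟩ := (hbp n).residualEq_isOpen
  have hev : ∀ᶠ x in residual (ℕ → Bool), x ∈ A ↔ x ∈ U :=
    Filter.eventuallyEq_set.mp hUeq
  have hM1 : IsMeagre (U \ A) := by
    rw [IsMeagre]
    exact hev.mono (fun x hx hx' => hx'.2 (hx.mpr hx'.1))
  have hM1' : IsMeagre (A \ U) := by
    rw [IsMeagre]
    exact hev.mono (fun x hx hx' => hx'.2 (hx.mp hx'.1))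
  -- U is nonmeagre, hence nonempty
  have hUnm : ¬ IsMeagre U := by
    intro h
    exact hn (IsMeagre.mono (hs := meagre_union hM1' h)
      (hts := fun x hx => by by_cases h' : x ∈ U <;> simp [h', hx]))
  have hUne : U.Nonempty := by
    rcases U.eq_empty_or_nonempty with h | h
    · exact absurd (by rw [h]; simp [IsMeagre]) hUnm
    · exact h
  obtain ⟨x, hxU⟩ := hUne
  -- find a basic cylinder around x inside U
  rw [isOpen_pi_iff] at hUo
  obtain ⟨I, u, hu, hsub⟩ := hUo x hxU
  set m : ℕ := (I.sup id) + 1 with hm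
  have hcyl : ∀ y : ℕ → Bool, (∀ i < m, y i = x i) → y ∈ U := by
    intro y hy
    apply hsub
    intro i hi
    have him : i < m := Nat.lt_succ_of_le (Finset.le_sup (f := id) hi)
    rw [hy i him]
    exact (hu i hi).2
  -- use density of the thread
  obtain ⟨k, hmk, hsk⟩ := hs m x
  set C : Set (ℕ → Bool) := {y | ∀ i < k, y i = s k i} with hC
  have hCU : C ⊆ U := by
    intro y hy
    apply hcyl
    intro i hi
    rw [hy i (lt_of_lt_of_le hi hmk), hsk i hi]
  have hCopen : IsOpen C := by
    have : C = ⋂ i ∈ Finset.range k, (fun y : ℕ → Bool => y i) ⁻¹' {s k i} := by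
      ext y; simp [hC]
    rw [this]
    exact isOpen_biInter_finset fun i _ =>
      (continuous_apply i).isOpen_preimage _ (isOpen_discrete _)
  have hCne : C.Nonempty := ⟨s k, fun i _ => rfl⟩
  -- the flip homeomorphism at coordinate k
  set φ : (ℕ → Bool) → (ℕ → Bool) := fun y i => if i = k then !(y i) else y i with hφ
  have hφinv : Function.Involutive φ := by
    intro y; funext i; by_cases h : i = k <;> simp [hφ, h]
  have hφc : Continuous φ := by
    apply continuous_pi
    intro i
    by_cases h : i = k
    · subst h
      simp only [hφ, if_pos rfl]
      exact Continuous.comp (continuous_of_discreteTopology (f := Bool.not)) (continuous_apply i)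
    · simp only [hφ, if_neg h]
      exact continuous_apply i
  have himg : ∀ V : Set (ℕ → Bool), φ '' V = φ ⁻¹' V := by
    intro V; ext z
    constructor
    · rintro ⟨w, hw, rfl⟩; simpa [hφinv w] using hw
    · intro hz; exact ⟨φ z, hz, hφinv z⟩
  have hφopen : IsOpenMap φ := fun V hV => by rw [himg]; exact hV.preimage hφc
  have hM2 : IsMeagre (φ ⁻¹' (U \ A)) :=
    IsMeagre.preimage_of_isOpenMap hφc hφopen hM1
  -- pick a point of C avoiding the meagre bad set
  have hMbad : IsMeagre ((U \ A) ∪ φ ⁻¹' (U \ A)) := meagre_union hM1 hM2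
  obtain ⟨y, hyC, hyGood⟩ :=
    (dense_of_mem_residual hMbad).inter_open_nonempty C hCopen hCne
  have hyU : y ∈ U := hCU hyC
  have hyGood' : y ∉ U \ A ∧ φ y ∉ U \ A := by
    constructor
    · intro h; exact hyGood (Or.inl h)
    · intro h; exact hyGood (Or.inr h)
  have hyA : y ∈ A := by
    by_contra h; exact hyGood'.1 ⟨hyU, h⟩
  have hφyC : φ y ∈ C := by
    intro i hi
    have : i ≠ k := Nat.ne_of_lt hi
    simp only [hφ, if_neg this]
    exact hyC i hi
  have hφyA : φ y ∈ A := by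
    by_contra h; exact hyGood'.2 ⟨hCU hφyC, h⟩
  -- y and φ y are adjacent
  have hadj : GsAdj s y (φ y) := by
    constructor
    · intro h
      have := congrFun h k
      simp [hφ] at this
    · refine ⟨k, fun i hi => hyC i hi, fun i hi => hφyC i hi, ?_, ?_⟩
      · simp [hφ]
      · intro i hi
        have : i ≠ k := Nat.ne_of_gt hi
        simp [hφ, this]
  have e1 : c y = n := hyA
  have e2 : c (φ y) = n := hφyA
  exact hc y (φ y) hadj (e1.trans e2.symm)

/-- `G_s` admits no proper colouring with countably many colours whose colour
classes all have the Baire property; in particular its Borel chromatic number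
is uncountable. -/
theorem Gs_chromatic_number_uncountable
    (s : ℕ → ℕ → Bool) (hs : DenseThread s) :
    (¬∃ c : (ℕ → Bool) → ℕ, (∀ a b, GsAdj s a b → c a ≠ c b) ∧
        ∀ n, BaireMeasurableSet (c ⁻¹' {n})) ∧
    (¬∃ c : (ℕ → Bool) → ℕ, (∀ a b, GsAdj s a b → c a ≠ c b) ∧
        ∀ n, MeasurableSet (c ⁻¹' {n})) := by
  refine ⟨Gs_no_baire_coloring s hs, ?_⟩
  rintro ⟨c, h1, h2⟩
  exact Gs_no_baire_coloring s hs ⟨c, h1, fun n => (h2 n).baireMeasurableSet⟩
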